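/- Let (λ_i)_{i≥0} be a strictly increasing sequence of positive reals converging to a finite limit λ_*, set d_k = λ_{2k} − λ_{2k−1}, assume ∑_{k=1}^∞ d_k < ∞, and let (P_i)_{i≥1} satisfy λ_{2i−1} ≤ P_i ≤ λ_{2i} for all i. Then the partial products U_g(μ) = ∏_{i=1}^g ((P_i − μ)/(λ_* − μ))·E_i((λ_* − λ_{2i})/(λ_* − μ)) converge as g → ∞, uniformly on each set {μ ∈ ℂ : |μ − λ_*| ≥ D} (D > 0), to a function U defined on ℂ \ {λ_*}, and U is holomorphic (complex differentiable) on ℂ \ {λ_*}. -/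

import Mathlib

open Filter

/-- The truncated exponential factor `E_n(z) = exp(z + z²/2 + ⋯ + zⁿ/n)`. -/
noncomputable def En (n : ℕ) (z : ℂ) : ℂ :=
  Complex.exp (∑ k ∈ Finset.Icc 1 n, z ^ k / (k : ℂ))

open Finset Topology

lemma norm_prod_sub_one_le (f : ℕ → ℂ) (t : Finset ℕ) :
    ‖∏ i ∈ t, f i - 1‖ ≤ ∏ i ∈ t, (1 + ‖f i - 1‖) - 1 := by
  classical
  induction t using Finset.induction_on with
  | empty => simp
  | insert a s ha ih =>
    rw [Finset.prod_insert ha, Finset.prod_insert ha]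
    have h1 : f a * ∏ i ∈ s, f i - 1 = (f a - 1) * ∏ i ∈ s, f i + (∏ i ∈ s, f i - 1) := by
      ring
    have h2 : ‖∏ i ∈ s, f i‖ ≤ ∏ i ∈ s, (1 + ‖f i - 1‖) := by
      rw [norm_prod]
      refine Finset.prod_le_prod (fun i _ => norm_nonneg _) (fun i _ => ?_)
      calc ‖f i‖ = ‖1 + (f i - 1)‖ := by ring_nf
        _ ≤ 1 + ‖f i - 1‖ := by simpa using norm_add_le 1 (f i - 1)
    have h3 : (0:ℝ) ≤ ∏ i ∈ s, (1 + ‖f i - 1‖) :=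
      Finset.prod_nonneg fun i _ => by positivity
    calc ‖f a * ∏ i ∈ s, f i - 1‖
        ≤ ‖f a - 1‖ * ‖∏ i ∈ s, f i‖ + ‖∏ i ∈ s, f i - 1‖ := by
          rw [h1]; exact (norm_add_le _ _).trans (by rw [norm_mul])
      _ ≤ ‖f a - 1‖ * ∏ i ∈ s, (1 + ‖f i - 1‖) + (∏ i ∈ s, (1 + ‖f i - 1‖) - 1) := by
          gcongr
      _ = (1 + ‖f a - 1‖) * ∏ i ∈ s, (1 + ‖f i - 1‖) - 1 := by ring

lemma prod_one_add_le_exp (u : ℕ → ℝ) (h0 : ∀ n, 0 ≤ u n) (t : Finset ℕ) :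
    ∏ i ∈ t, (1 + u i) ≤ Real.exp (∑ i ∈ t, u i) := by
  rw [Real.exp_sum]
  refine Finset.prod_le_prod (fun i _ => by linarith [h0 i]) (fun i _ => ?_)
  simpa [add_comm] using Real.add_one_le_exp (u i)

lemma uniformCauchy_prod {α : Type*} (f : ℕ → α → ℂ) {s : Set α} {u : ℕ → ℝ}
    (hu : Summable u) (h0 : ∀ n, 0 ≤ u n)
    (hb : ∀ n, 1 ≤ n → ∀ x ∈ s, ‖f n x - 1‖ ≤ u n) :
    UniformCauchySeqOn (fun g x => ∏ i ∈ Finset.Icc 1 g, f i x) atTop s := by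
  rw [Metric.uniformCauchySeqOn_iff]
  intro ε hε
  set C := Real.exp (∑' n, u n) with hC
  have hC0 : 0 < C := Real.exp_pos _
  set δ := Real.log (1 + ε / (2 * C)) with hδ
  have hδ0 : 0 < δ := Real.log_pos (by
    have h : 0 < ε / (2 * C) := by positivity
    linarith)
  -- partial sums over Ioc 0 g form a Cauchy sequence
  have heq : (fun g => ∑ i ∈ Finset.Ioc 0 g, u i)
      = fun g => (∑ i ∈ Finset.range (g + 1), u i) - u 0 := by
    funext g
    rw [Finset.range_eq_Ico, Finset.sum_eq_sum_Ico_succ_bot (Nat.succ_pos g)]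
    rw [Nat.succ_eq_add_one, Finset.Ico_add_one_right_eq_Icc, Finset.Icc_add_one_left_eq_Ioc]
    ring
  have hS : CauchySeq (fun g => ∑ i ∈ Finset.Ioc 0 g, u i) := by
    rw [heq]
    exact ((hu.hasSum.tendsto_sum_nat.comp (tendsto_add_atTop_nat 1)).sub
      tendsto_const_nhds).cauchySeq
  obtain ⟨N, hN⟩ := Metric.cauchySeq_iff.1 hS δ hδ0
  have key : ∀ m n, N ≤ m → m ≤ n → ∀ x ∈ s,
      dist (∏ i ∈ Finset.Icc 1 m, f i x) (∏ i ∈ Finset.Icc 1 n, f i x) < ε := by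
    intro m n hm hmn x hx
    have hsplit : ∏ i ∈ Finset.Icc 1 n, f i x
        = (∏ i ∈ Finset.Icc 1 m, f i x) * ∏ i ∈ Finset.Ioc m n, f i x := by
      rw [show (1:ℕ) = 0 + 1 from rfl, Finset.Icc_add_one_left_eq_Ioc, Finset.Icc_add_one_left_eq_Ioc]
      exact (Finset.prod_Ioc_consecutive _ (Nat.zero_le m) hmn).symm
    have bound1 : ‖∏ i ∈ Finset.Icc 1 m, f i x‖ ≤ C := by
      rw [norm_prod]
      calc ∏ i ∈ Finset.Icc 1 m, ‖f i x‖
          ≤ ∏ i ∈ Finset.Icc 1 m, (1 + u i) := by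
            refine Finset.prod_le_prod (fun i _ => norm_nonneg _) (fun i hi => ?_)
            have h1i : 1 ≤ i := (Finset.mem_Icc.1 hi).1
            calc ‖f i x‖ = ‖1 + (f i x - 1)‖ := by ring_nf
              _ ≤ 1 + ‖f i x - 1‖ := by simpa using norm_add_le 1 (f i x - 1)
              _ ≤ 1 + u i := by linarith [hb i h1i x hx]
        _ ≤ Real.exp (∑ i ∈ Finset.Icc 1 m, u i) := prod_one_add_le_exp u h0 _
        _ ≤ C := Real.exp_le_exp.2 (Summable.sum_le_tsum _ (fun i _ => h0 i) hu)
    have hsum : ∑ i ∈ Finset.Ioc m n, u i < δ := by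
      have hd := hN n (hm.trans hmn) m hm
      rw [Real.dist_eq] at hd
      have hsplit2 : (∑ i ∈ Finset.Ioc 0 m, u i) + ∑ i ∈ Finset.Ioc m n, u i
          = ∑ i ∈ Finset.Ioc 0 n, u i :=
        Finset.sum_Ioc_consecutive _ (Nat.zero_le m) hmn
      calc ∑ i ∈ Finset.Ioc m n, u i
          = (∑ i ∈ Finset.Ioc 0 n, u i) - ∑ i ∈ Finset.Ioc 0 m, u i := by linarith
        _ ≤ |(∑ i ∈ Finset.Ioc 0 n, u i) - ∑ i ∈ Finset.Ioc 0 m, u i| := le_abs_self _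
        _ < δ := hd
    have bound2 : ‖(∏ i ∈ Finset.Ioc m n, f i x) - 1‖ < ε / (2 * C) := by
      calc ‖(∏ i ∈ Finset.Ioc m n, f i x) - 1‖
          ≤ ∏ i ∈ Finset.Ioc m n, (1 + ‖f i x - 1‖) - 1 := norm_prod_sub_one_le _ _
        _ ≤ Real.exp (∑ i ∈ Finset.Ioc m n, ‖f i x - 1‖) - 1 := by
            have := prod_one_add_le_exp (fun i => ‖f i x - 1‖) (fun i => norm_nonneg _)
              (Finset.Ioc m n)
            linarith
        _ ≤ Real.exp (∑ i ∈ Finset.Ioc m n, u i) - 1 := by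
            have : ∑ i ∈ Finset.Ioc m n, ‖f i x - 1‖ ≤ ∑ i ∈ Finset.Ioc m n, u i :=
              Finset.sum_le_sum (fun i hi => hb i
                (le_trans (Nat.one_le_iff_ne_zero.2 (by
                  have := (Finset.mem_Ioc.1 hi).1; omega)) le_rfl) x hx)
            have := Real.exp_le_exp.2 this
            linarith
        _ < Real.exp δ - 1 := by
            have := Real.exp_lt_exp.2 hsum
            linarith
        _ = ε / (2 * C) := by
            rw [hδ, Real.exp_log (by positivity)]; ring
    rw [dist_eq_norm, hsplit]
    calc ‖(∏ i ∈ Finset.Icc 1 m, f i x)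
          - (∏ i ∈ Finset.Icc 1 m, f i x) * ∏ i ∈ Finset.Ioc m n, f i x‖
        = ‖∏ i ∈ Finset.Icc 1 m, f i x‖ * ‖(∏ i ∈ Finset.Ioc m n, f i x) - 1‖ := by
          rw [← norm_mul, ← norm_neg]; congr 1; ring
      _ ≤ C * (ε / (2 * C)) := by
          apply mul_le_mul bound1 bound2.le (norm_nonneg _) hC0.le
      _ = ε / 2 := by field_simp
      _ < ε := by linarith
  refine ⟨N, fun m hm n hn x hx => ?_⟩
  rcases le_total m n with h | h
  · exact key m n hm h x hx
  · rw [dist_comm]; exact key n m hn h x hx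


lemma logTaylor_neg_eq (n : ℕ) (w : ℂ) :
    Complex.logTaylor (n + 1) (-w) = -∑ k ∈ Finset.Icc 1 n, w ^ k / (k : ℂ) := by
  induction n with
  | zero => simp [Complex.logTaylor_succ, Complex.logTaylor_zero]
  | succ n ih =>
    rw [Complex.logTaylor_succ, Finset.sum_Icc_succ_top (by omega : 1 ≤ n + 1)]
    have hpow : ((-1 : ℂ)) ^ (n + 1 + 1) * (-w) ^ (n + 1) = -(w ^ (n + 1)) := by
      rw [show ((-w : ℂ)) ^ (n + 1) = (-1) ^ (n + 1) * w ^ (n + 1) from neg_pow _ _,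
        ← mul_assoc, ← pow_add]
      rw [show (-1 : ℂ) ^ (n + 1 + 1 + (n + 1)) = -1 from Odd.neg_one_pow ⟨n + 1, by ring⟩]
      ring
    simp only [Pi.add_apply, ih]
    rw [show ((-1 : ℂ)) ^ (n + 1 + 1) * (-w) ^ (n + 1) / ((n+1 : ℕ) : ℂ)
        = -(w ^ (n + 1)) / ((n+1 : ℕ) : ℂ) by rw [hpow]]
    push_cast
    ring

lemma key_weier (n : ℕ) {w : ℂ} (hw : ‖w‖ ≤ 1 / 2) :
    ‖(1 - w) * En n w - 1‖ ≤ 4 * ‖w‖ ^ (n + 1) := by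
  have hw1 : ‖w‖ < 1 := lt_of_le_of_lt hw (by norm_num)
  have hslit : 1 + -w ∈ Complex.slitPlane :=
    Complex.mem_slitPlane_of_norm_lt_one (by simpa using hw1)
  have hslit' : (1 : ℂ) - w ∈ Complex.slitPlane := by rwa [sub_eq_add_neg]
  have hne : (1 : ℂ) - w ≠ 0 := Complex.slitPlane_ne_zero hslit'
  set S := ∑ k ∈ Finset.Icc 1 n, w ^ k / (k : ℂ) with hS
  have hfac : (1 - w) * En n w = Complex.exp (Complex.log (1 - w) + S) := by
    rw [Complex.exp_add, Complex.exp_log hne]; rfl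
  have hR : ‖Complex.log (1 - w) + S‖ ≤ 2 * ‖w‖ ^ (n + 1) := by
    have h1 := Complex.norm_log_one_sub_inv_add_logTaylor_neg_le n hw1
    rw [Complex.log_inv _ (Complex.slitPlane_arg_ne_pi hslit'), logTaylor_neg_eq] at h1
    have h2 : ‖-Complex.log (1 - w) + -S‖ = ‖Complex.log (1 - w) + S‖ := by
      rw [← norm_neg]; ring_nf
    rw [← hS] at h1
    rw [h2] at h1
    refine h1.trans ?_
    have hinv : (1 - ‖w‖)⁻¹ ≤ 2 := by
      rw [inv_le_comm₀ (by linarith) (by norm_num)]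
      linarith
    have hp : (0:ℝ) ≤ ‖w‖ ^ (n + 1) := pow_nonneg (norm_nonneg _) _
    have h3 : ‖w‖ ^ (n + 1) * (1 - ‖w‖)⁻¹ / ((n : ℝ) + 1)
        ≤ ‖w‖ ^ (n + 1) * 2 / ((n : ℝ) + 1) := by gcongr
    have h4 : ‖w‖ ^ (n + 1) * 2 / ((n : ℝ) + 1) ≤ ‖w‖ ^ (n + 1) * 2 := by
      apply div_le_self (by positivity)
      have : (1:ℝ) ≤ (n : ℝ) + 1 := by linarith [Nat.cast_nonneg (α := ℝ) n]
      linarith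
    linarith
  have hRle1 : ‖Complex.log (1 - w) + S‖ ≤ 1 := by
    have hp1 : ‖w‖ ^ (n + 1) ≤ (1 / 2 : ℝ) ^ (n + 1) :=
      pow_le_pow_left₀ (norm_nonneg _) hw _
    have hp2 : (1 / 2 : ℝ) ^ (n + 1) ≤ 1 / 2 := by
      calc (1 / 2 : ℝ) ^ (n + 1) ≤ (1 / 2 : ℝ) ^ 1 :=
        pow_le_pow_of_le_one (by norm_num) (by norm_num) (by omega)
      _ = 1 / 2 := pow_one _
    linarith
  calc ‖(1 - w) * En n w - 1‖ = ‖Complex.exp (Complex.log (1 - w) + S) - 1‖ := by rw [hfac]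
    _ ≤ 2 * ‖Complex.log (1 - w) + S‖ := by
        simpa using Complex.norm_exp_sub_one_le
          (x := Complex.log (1 - w) + S) (by simpa using hRle1)
    _ ≤ 4 * ‖w‖ ^ (n + 1) := by linarith

lemma norm_En_le (n : ℕ) (w : ℂ) :
    ‖En n w‖ ≤ Real.exp (∑ k ∈ Finset.Icc 1 n, ‖w‖ ^ k / k) := by
  rw [En, Complex.norm_exp]
  apply Real.exp_le_exp.2
  calc (∑ k ∈ Finset.Icc 1 n, w ^ k / (k : ℂ)).re
      ≤ ‖∑ k ∈ Finset.Icc 1 n, w ^ k / (k : ℂ)‖ := Complex.re_le_norm _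
    _ ≤ ∑ k ∈ Finset.Icc 1 n, ‖w ^ k / (k : ℂ)‖ := norm_sum_le _ _
    _ = ∑ k ∈ Finset.Icc 1 n, ‖w‖ ^ k / k := by
        refine Finset.sum_congr rfl (fun k _ => ?_)
        rw [norm_div, norm_pow, Complex.norm_natCast]

lemma sum_half_le (n : ℕ) : ∑ k ∈ Finset.Icc 1 n, (1 / 2 : ℝ) ^ k ≤ 1 := by
  have h := sum_geometric_two_le (n + 1)
  rw [Finset.range_eq_Ico, Finset.sum_eq_sum_Ico_succ_bot (Nat.succ_pos n),
    Nat.succ_eq_add_one, Finset.Ico_add_one_right_eq_Icc, Finset.Icc_add_one_left_eq_Ioc] at h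
  rw [show Finset.Icc 1 n = Finset.Icc (0 + 1) n from rfl, Finset.Icc_add_one_left_eq_Ioc]
  norm_num at h
  linarith

lemma norm_En_le_exp_one (n : ℕ) {w : ℂ} (hw : ‖w‖ ≤ 1 / 2) :
    ‖En n w‖ ≤ Real.exp 1 := by
  refine (norm_En_le n w).trans (Real.exp_le_exp.2 ?_)
  calc ∑ k ∈ Finset.Icc 1 n, ‖w‖ ^ k / k
      ≤ ∑ k ∈ Finset.Icc 1 n, (1 / 2 : ℝ) ^ k := by
        refine Finset.sum_le_sum (fun k hk => ?_)
        have hk1 : 1 ≤ k := (Finset.mem_Icc.1 hk).1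
        have ha : ‖w‖ ^ k / k ≤ ‖w‖ ^ k := by
          apply div_le_self (by positivity)
          exact_mod_cast hk1
        have hb2 : ‖w‖ ^ k ≤ (1 / 2 : ℝ) ^ k := pow_le_pow_left₀ (norm_nonneg _) hw _
        linarith
    _ ≤ 1 := sum_half_le n

lemma factor_bound (n : ℕ) (v : ℂ) {w : ℂ} (hw : ‖w‖ ≤ 1 / 2) :
    ‖(1 - v) * En n w - 1‖ ≤ 4 * (1 / 2 : ℝ) ^ (n + 1) + ‖v - w‖ * Real.exp 1 := by
  have h1 : (1 - v) * En n w - 1 = ((1 - w) * En n w - 1) + (w - v) * En n w := by ring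
  calc ‖(1 - v) * En n w - 1‖
      ≤ ‖(1 - w) * En n w - 1‖ + ‖(w - v) * En n w‖ := by rw [h1]; exact norm_add_le _ _
    _ ≤ 4 * ‖w‖ ^ (n + 1) + ‖v - w‖ * Real.exp 1 := by
        refine add_le_add (key_weier n hw) ?_
        rw [norm_mul, ← norm_neg (w - v), neg_sub]
        exact mul_le_mul_of_nonneg_left (norm_En_le_exp_one n hw) (norm_nonneg _)
    _ ≤ 4 * (1 / 2 : ℝ) ^ (n + 1) + ‖v - w‖ * Real.exp 1 := by
        have := pow_le_pow_left₀ (norm_nonneg w) hw (n + 1)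
        nlinarith [norm_nonneg (v - w), Real.exp_pos 1]
/-- The partial products
`U_g(μ) = ∏_{i=1}^g ((P_i − μ)/(λ_* − μ))·E_i((λ_* − λ_{2i})/(λ_* − μ))`
converge as `g → ∞`, uniformly on each set `{μ : |μ − λ_*| ≥ D}`, to a function `U`
holomorphic on `ℂ \ {λ_*}`. -/
theorem partial_products_tendstoUniformly_holomorphic
    (lam : ℕ → ℝ) (lamStar : ℝ) (hmono : StrictMono lam) (hpos : ∀ i, 0 < lam i)
    (hlim : Tendsto lam atTop (nhds lamStar))
    (hd : Summable (fun k : ℕ => lam (2 * k + 2) - lam (2 * k + 1)))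
    (P : ℕ → ℝ) (hP : ∀ i : ℕ, lam (2 * i + 1) ≤ P (i + 1) ∧ P (i + 1) ≤ lam (2 * i + 2)) :
    ∃ U : ℂ → ℂ,
      (∀ D : ℝ, 0 < D →
        TendstoUniformlyOn
          (fun (g : ℕ) (μ : ℂ) => ∏ i ∈ Finset.Icc 1 g,
            ((((P i : ℝ) : ℂ) - μ) / ((lamStar : ℂ) - μ) *
              En i (((lamStar : ℂ) - ((lam (2 * i) : ℝ) : ℂ)) / ((lamStar : ℂ) - μ))))
          U atTop {μ : ℂ | D ≤ ‖μ - (lamStar : ℂ)‖}) ∧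
      DifferentiableOn ℂ U {μ : ℂ | μ ≠ (lamStar : ℂ)} := by
  classical
  set f : ℕ → ℂ → ℂ := fun i μ =>
    ((((P i : ℝ) : ℂ) - μ) / ((lamStar : ℂ) - μ) *
      En i (((lamStar : ℂ) - ((lam (2 * i) : ℝ) : ℂ)) / ((lamStar : ℂ) - μ))) with hfdef
  have hle : ∀ j, lam j ≤ lamStar := fun j => hmono.monotone.ge_of_tendsto hlim j
  have hlt : ∀ j, lam j < lamStar := fun j =>
    lt_of_lt_of_le (hmono (Nat.lt_succ_self j)) (hle (j + 1))
  set K : ℝ := lamStar - lam 1 with hK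
  have hK0 : 0 < K := sub_pos.2 (hlt 1)
  set A : ℕ → ℝ := fun i => lamStar - P i with hA
  set B : ℕ → ℝ := fun i => lamStar - lam (2 * i) with hB
  set dd : ℕ → ℝ := fun k => lam (2 * k + 2) - lam (2 * k + 1) with hdd
  have hddSummable : Summable dd := hd
  have hdd0 : ∀ k, 0 ≤ dd k := fun k => sub_nonneg.2 (hmono.monotone (by omega))
  have hB0 : ∀ i, 0 ≤ B i := fun i => sub_nonneg.2 (hle _)
  have h2eq : ∀ j : ℕ, lam (2 * (j + 1)) = lam (2 * j + 2) := fun j => rfl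
  have hBA : ∀ j, B (j + 1) ≤ A (j + 1) := by
    intro j
    have h2 := (hP j).2
    simp only [hA, hB, h2eq j]
    linarith
  have hA0 : ∀ j, 0 ≤ A (j + 1) := fun j => le_trans (hB0 _) (hBA j)
  have hAK : ∀ j, A (j + 1) ≤ K := by
    intro j
    have h1 : lam 1 ≤ lam (2 * j + 1) := hmono.monotone (by omega)
    have h2 := (hP j).1
    simp only [hA, hK]
    linarith
  have hABdd : ∀ j, A (j + 1) - B (j + 1) ≤ dd j := by
    intro j
    have h1 := (hP j).1
    simp only [hA, hB, hdd, h2eq j]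
    linarith
  have hBK : ∀ j, B (j + 1) ≤ K := fun j => (hBA j).trans (hAK j)
  have hBtend : Tendsto B atTop (𝓝 0) := by
    have h1 : Tendsto (fun i : ℕ => 2 * i) atTop atTop :=
      tendsto_atTop_mono (fun i => by simpa using (by omega : i ≤ 2 * i)) tendsto_id
    have h2 : Tendsto (fun i : ℕ => lam (2 * i)) atTop (𝓝 lamStar) := hlim.comp h1
    have h3 : Tendsto (fun i : ℕ => lamStar - lam (2 * i)) atTop (𝓝 (lamStar - lamStar)) :=
      Tendsto.sub tendsto_const_nhds h2
    simpa [hB, sub_self] using h3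
  -- the uniform Cauchy property on each region
  have hmain : ∀ D : ℝ, 0 < D →
      UniformCauchySeqOn (fun g μ => ∏ i ∈ Finset.Icc 1 g, f i μ) atTop
        {μ : ℂ | D ≤ ‖μ - (lamStar : ℂ)‖} := by
    intro D hD
    obtain ⟨N, hN⟩ := eventually_atTop.1
      (hBtend.eventually (eventually_le_nhds (by positivity : (0:ℝ) < D / 2)))
    set Bd : ℕ → ℝ := fun i =>
      1 + (1 + K / D) * Real.exp (∑ k ∈ Finset.Icc 1 i, (K / D) ^ k / k) with hBddef
    set u : ℕ → ℝ := fun i => if i < N then Bd i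
      else 4 * (1 / 2 : ℝ) ^ (i + 1) + Real.exp 1 * (dd (i - 1) / D) with hu
    have hBd0 : ∀ i, 0 ≤ Bd i := by
      intro i
      have : 0 < K / D := by positivity
      simp only [hBddef]
      positivity
    have hu0 : ∀ i, 0 ≤ u i := by
      intro i
      by_cases h : i < N
      · simp only [hu, if_pos h]; exact hBd0 i
      · simp only [hu, if_neg h]
        have := hdd0 (i - 1)
        positivity
    have hgeo : Summable (fun i : ℕ => (1 / 2 : ℝ) ^ i) :=
      summable_geometric_of_lt_one (by norm_num) (by norm_num)
    have hsum_g : Summable (fun i : ℕ =>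
        4 * (1 / 2 : ℝ) ^ (i + 1) + Real.exp 1 * (dd (i - 1) / D)) := by
      apply Summable.add
      · refine (hgeo.mul_left 2).congr (fun i => ?_)
        rw [pow_succ]; ring
      · have h2 : Summable (fun i : ℕ => dd (i - 1)) := by
          rw [← summable_nat_add_iff 1]
          simpa using hddSummable
        exact ((h2.div_const D).mul_left (Real.exp 1))
    have husum : Summable u := by
      rw [← summable_nat_add_iff N]
      have h3 : (fun i => u (i + N)) = fun i =>
          4 * (1 / 2 : ℝ) ^ (i + N + 1) + Real.exp 1 * (dd (i + N - 1) / D) := by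
        funext i
        simp only [hu]
        rw [if_neg (by omega)]
      rw [h3]
      exact (summable_nat_add_iff N).2 hsum_g
    have hbnd : ∀ n, 1 ≤ n → ∀ μ ∈ {μ : ℂ | D ≤ ‖μ - (lamStar : ℂ)‖},
        ‖f n μ - 1‖ ≤ u n := by
      rintro n hn μ hμ
      obtain ⟨j, rfl⟩ : ∃ j, n = j + 1 := ⟨n - 1, by omega⟩
      set t : ℂ := (lamStar : ℂ) - μ with htdef
      have hDt : D ≤ ‖t‖ := by
        rw [htdef, norm_sub_rev]
        exact hμ
      have ht0 : (0:ℝ) < ‖t‖ := lt_of_lt_of_le hD hDt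
      have htne : t ≠ 0 := by
        intro h; rw [h] at ht0; simp at ht0
      have hPnum : (((P (j+1) : ℝ)) : ℂ) - μ = t - (((A (j+1) : ℝ)) : ℂ) := by
        rw [htdef]; simp only [hA]; push_cast; ring
      have hPid : ((((P (j+1) : ℝ)) : ℂ) - μ) / t = 1 - (((A (j+1) : ℝ)) : ℂ) / t := by
        rw [hPnum, sub_div, div_self htne]
      have hwid : (lamStar : ℂ) - ((lam (2 * (j+1)) : ℝ) : ℂ) = (((B (j+1) : ℝ)) : ℂ) := by
        simp only [hB]; push_cast; ring
      have hnormw : ‖(((B (j+1) : ℝ)) : ℂ) / t‖ = B (j+1) / ‖t‖ := by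
        rw [norm_div, Complex.norm_real, Real.norm_of_nonneg (hB0 _)]
      have hnormv : ‖(((A (j+1) : ℝ)) : ℂ) / t‖ = A (j+1) / ‖t‖ := by
        rw [norm_div, Complex.norm_real, Real.norm_of_nonneg (hA0 _)]
      have hwK : ‖(((B (j+1) : ℝ)) : ℂ) / t‖ ≤ K / D := by
        rw [hnormw]
        exact div_le_div₀ hK0.le (hBK j) hD hDt
      have hvK : ‖(((A (j+1) : ℝ)) : ℂ) / t‖ ≤ K / D := by
        rw [hnormv]
        exact div_le_div₀ hK0.le (hAK j) hD hDt
      simp only [hfdef]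
      rw [← htdef, hPid, hwid]
      by_cases hcase : j + 1 < N
      · -- crude bound
        have hEn : ‖En (j+1) ((((B (j+1) : ℝ)) : ℂ) / t)‖
            ≤ Real.exp (∑ k ∈ Finset.Icc 1 (j+1), (K / D) ^ k / k) := by
          refine (norm_En_le _ _).trans (Real.exp_le_exp.2 ?_)
          refine Finset.sum_le_sum (fun k hk => ?_)
          gcongr <;> first
            | exact norm_nonneg _
            | exact hwK
        have h1v : ‖1 - (((A (j+1) : ℝ)) : ℂ) / t‖ ≤ 1 + K / D := by
          refine (norm_sub_le _ _).trans ?_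
          rw [norm_one]
          linarith
        have hX : ‖(1 - (((A (j+1) : ℝ)) : ℂ) / t) * En (j+1) ((((B (j+1) : ℝ)) : ℂ) / t)‖
            ≤ (1 + K / D) * Real.exp (∑ k ∈ Finset.Icc 1 (j+1), (K / D) ^ k / k) := by
          rw [norm_mul]
          exact mul_le_mul h1v hEn (norm_nonneg _) (by positivity)
        have : ‖(1 - (((A (j+1) : ℝ)) : ℂ) / t) * En (j+1) ((((B (j+1) : ℝ)) : ℂ) / t) - 1‖
            ≤ 1 + (1 + K / D) * Real.exp (∑ k ∈ Finset.Icc 1 (j+1), (K / D) ^ k / k) := by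
          refine (norm_sub_le _ _).trans ?_
          rw [norm_one]
          linarith
        simp only [hu, if_pos hcase, hBddef]
        exact this
      · -- tail bound
        push_neg at hcase
        have hBsmall : B (j + 1) ≤ D / 2 := hN (j + 1) hcase
        have hwhalf : ‖(((B (j+1) : ℝ)) : ℂ) / t‖ ≤ 1 / 2 := by
          rw [hnormw]
          have h1 : B (j+1) / ‖t‖ ≤ B (j+1) / D :=
            div_le_div_of_nonneg_left (hB0 _) hD hDt
          have h2 : B (j+1) / D ≤ (D / 2) / D := by gcongr
          have h3 : (D / 2) / D = 1 / 2 := by field_simp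
          linarith
        have hfb := factor_bound (j+1) ((((A (j+1) : ℝ)) : ℂ) / t) hwhalf
        have hvw : ‖(((A (j+1) : ℝ)) : ℂ) / t - (((B (j+1) : ℝ)) : ℂ) / t‖ ≤ dd j / D := by
          have he : (((A (j+1) : ℝ)) : ℂ) / t - (((B (j+1) : ℝ)) : ℂ) / t
              = (((A (j+1) - B (j+1) : ℝ)) : ℂ) / t := by push_cast; ring
          rw [he, norm_div, Complex.norm_real,
            Real.norm_of_nonneg (by linarith [hBA j] : (0:ℝ) ≤ A (j+1) - B (j+1))]
          exact div_le_div₀ (hdd0 j) (hABdd j) hD hDt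
        have hfinal : ‖(1 - (((A (j+1) : ℝ)) : ℂ) / t) * En (j+1) ((((B (j+1) : ℝ)) : ℂ) / t) - 1‖
            ≤ 4 * (1 / 2 : ℝ) ^ (j + 1 + 1) + Real.exp 1 * (dd j / D) := by
          refine hfb.trans ?_
          have := mul_le_mul_of_nonneg_right hvw (Real.exp_pos 1).le
          linarith
        simp only [hu, if_neg (by omega : ¬ (j + 1 < N))]
        simpa using hfinal
    exact uniformCauchy_prod f husum hu0 hbnd
  -- the limit function
  set U : ℂ → ℂ := fun μ => limUnder atTop (fun g => ∏ i ∈ Finset.Icc 1 g, f i μ) with hU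
  have hpt : ∀ μ : ℂ, μ ≠ (lamStar : ℂ) →
      Tendsto (fun g => ∏ i ∈ Finset.Icc 1 g, f i μ) atTop (𝓝 (U μ)) := by
    intro μ hμ
    have hD0 : 0 < ‖μ - (lamStar : ℂ)‖ := norm_pos_iff.2 (sub_ne_zero.2 hμ)
    have hmem : μ ∈ {μ' : ℂ | ‖μ - (lamStar : ℂ)‖ ≤ ‖μ' - (lamStar : ℂ)‖} := by
      simp only [Set.mem_setOf_eq]; exact le_rfl
    have hc : CauchySeq (fun g => ∏ i ∈ Finset.Icc 1 g, f i μ) :=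
      (hmain _ hD0).cauchySeq hmem
    exact hc.tendsto_limUnder
  have hne_of_mem : ∀ (D : ℝ), 0 < D → ∀ μ : ℂ, D ≤ ‖μ - (lamStar : ℂ)‖ →
      μ ≠ (lamStar : ℂ) := by
    intro D hD μ hμ hEq
    rw [hEq] at hμ
    simp at hμ
    linarith
  have hTU : ∀ D : ℝ, 0 < D →
      TendstoUniformlyOn (fun g μ => ∏ i ∈ Finset.Icc 1 g, f i μ) U atTop
        {μ : ℂ | D ≤ ‖μ - (lamStar : ℂ)‖} := by
    intro D hD
    exact (hmain D hD).tendstoUniformlyOn_of_tendsto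
      (fun μ hμ => hpt μ (hne_of_mem D hD μ hμ))
  have hdiffg : ∀ g : ℕ, DifferentiableOn ℂ (fun μ => ∏ i ∈ Finset.Icc 1 g, f i μ)
      {μ : ℂ | μ ≠ (lamStar : ℂ)} := by
    intro g
    apply DifferentiableOn.fun_finsetProd
    intro i _
    have hne : ∀ μ ∈ {μ : ℂ | μ ≠ (lamStar : ℂ)}, (lamStar : ℂ) - μ ≠ 0 := fun μ hμ =>
      sub_ne_zero.2 (Ne.symm hμ)
    have hden : DifferentiableOn ℂ (fun μ : ℂ => (lamStar : ℂ) - μ)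
        {μ : ℂ | μ ≠ (lamStar : ℂ)} :=
      ((differentiable_const _).sub differentiable_id).differentiableOn
    simp only [hfdef]
    apply DifferentiableOn.mul
    · exact DifferentiableOn.div
        (((differentiable_const _).sub differentiable_id).differentiableOn) hden hne
    · have hEn : (fun μ : ℂ =>
          En i (((lamStar : ℂ) - ((lam (2 * i) : ℝ) : ℂ)) / ((lamStar : ℂ) - μ)))
          = fun μ : ℂ => Complex.exp (∑ k ∈ Finset.Icc 1 i,
            ((((lamStar : ℂ) - ((lam (2 * i) : ℝ) : ℂ)) / ((lamStar : ℂ) - μ)) ^ k / (k : ℂ))) :=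
        rfl
      rw [hEn]
      apply DifferentiableOn.cexp
      apply DifferentiableOn.fun_sum
      intro k _
      exact (((differentiableOn_const _).div hden hne).pow k).div_const _
  have hloc : TendstoLocallyUniformlyOn (fun g μ => ∏ i ∈ Finset.Icc 1 g, f i μ) U atTop
      {μ : ℂ | μ ≠ (lamStar : ℂ)} := by
    intro v hv x hx
    have hx' : x ≠ (lamStar : ℂ) := hx
    have hD0 : 0 < ‖x - (lamStar : ℂ)‖ := norm_pos_iff.2 (sub_ne_zero.2 hx')
    refine ⟨{μ : ℂ | ‖x - (lamStar : ℂ)‖ / 2 ≤ ‖μ - (lamStar : ℂ)‖},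
      ?_, ?_⟩
    · apply mem_nhdsWithin_of_mem_nhds
      rw [Metric.mem_nhds_iff]
      refine ⟨‖x - (lamStar : ℂ)‖ / 2, by positivity, fun μ hμ' => ?_⟩
      have h1 : dist μ x < ‖x - (lamStar : ℂ)‖ / 2 := hμ'
      rw [Complex.dist_eq] at h1
      have htri : ‖x - (lamStar : ℂ)‖
          ≤ ‖x - μ‖ + ‖μ - (lamStar : ℂ)‖ := by
        calc ‖x - (lamStar : ℂ)‖ = ‖(x - μ) + (μ - (lamStar : ℂ))‖ := by
              ring_nf
          _ ≤ _ := norm_add_le _ _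
      have habs : ‖x - μ‖ = ‖μ - x‖ := norm_sub_rev x μ
      show ‖x - (lamStar : ℂ)‖ / 2 ≤ ‖μ - (lamStar : ℂ)‖
      rw [habs] at htri
      linarith
    · exact hTU (‖x - (lamStar : ℂ)‖ / 2) (by positivity) v hv
  refine ⟨U, fun D hD => hTU D hD, ?_⟩
  exact hloc.differentiableOn (Eventually.of_forall hdiffg) isOpen_ne
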